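/- Every locally stratified constraint logic program P has a unique perfect model M(P). -/

import Mathlib

namespace CLP

/-! ### The set `W` of countable ordinals -/

/-- `W` : the set of countable ordinals. -/
abbrev W : Type 1 := {o : Ordinal.{0} // o < (Cardinal.aleph 1).ord}

theorem natW_lt (n : ℕ) : (n : Ordinal.{0}) < (Cardinal.aleph 1).ord := by
  refine Cardinal.lt_ord.mpr ?_
  simpa using (Cardinal.nat_lt_aleph0 n).trans Cardinal.aleph0_lt_aleph_one

/-- natural numbers as countable ordinals -/
def natW (n : ℕ) : W := ⟨n, natW_lt n⟩

/-- the zero ordinal as an element of `W` -/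
def zeroW : W := natW 0

theorem succW_lt {o : Ordinal.{0}} (h : o < (Cardinal.aleph 1).ord) :
    o + 1 < (Cardinal.aleph 1).ord := by
  have hlim : Order.IsSuccLimit (Cardinal.aleph 1).ord :=
    Cardinal.isSuccLimit_ord (Cardinal.aleph0_le_aleph 1)
  exact hlim.add_one_lt h

/-- the successor operation on countable ordinals (`σ(A) + 1`) -/
def succW (o : W) : W := ⟨o.1 + 1, succW_lt o.2⟩

/-! ### Syntax and semantics of constraint logic programs

Atoms, constraints, and clauses are represented semantically: an atom with variables
in `V` is a user-defined predicate symbol (from `Pu`) together with the function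
mapping each valuation `v : V → D` to the tuple of values of its argument terms, and a
constraint is represented by its satisfaction predicate on valuations (the
interpretation `𝒟` for the constraints, with carrier `D`, is thereby fixed). -/

/-- An atom: a user-defined predicate symbol together with its (semantically
represented) tuple of argument terms. -/
structure SAtm (V D Pu : Type) where
  pred : Pu
  args : (V → D) → List D

/-- Ground atoms: the base `B_𝒟` is `{p(d₁,…,dₙ) | p ∈ Pred_u, dᵢ ∈ D}`. -/
abbrev GrAtm (Pu D : Type) := Pu × List D

variable {V D Pu : Type}

/-- the ground atom `v(A)` obtained by applying the valuation `v` to the atom `A` -/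
def SAtm.eval (A : SAtm V D Pu) (v : V → D) : GrAtm Pu D := (A.pred, A.args v)

/-- A clause `H ← c ∧ L₁ ∧ … ∧ Lₘ`: a head atom `H`, a constraint `c`, and a body,
i.e. a list of literals; a literal is a pair of a sign (`true` = positive literal `A`,
`false` = negative literal `¬A`) and an atom. -/
structure SClause (V D Pu : Type) where
  head : SAtm V D Pu
  constr : (V → D) → Prop
  body : List (Bool × SAtm V D Pu)

/-- A constraint logic program: a set of clauses (finiteness is stated separately). -/
abbrev SProg (V D Pu : Type) := Set (SClause V D Pu)

/-- truth of a ground literal in a `D`-interpretation `I` -/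
def litTrue (I : Set (GrAtm Pu D)) (l : Bool × GrAtm Pu D) : Prop :=
  if l.1 then l.2 ∈ I else l.2 ∉ I

/-- truth of the ground instance `v(γ)` of the clause `γ` in the `D`-interpretation `I` -/
def SClause.groundTrue (γ : SClause V D Pu) (I : Set (GrAtm Pu D)) (v : V → D) : Prop :=
  γ.constr v → (∀ l ∈ γ.body, litTrue I (l.1, l.2.eval v)) → γ.head.eval v ∈ I

/-- `I` is a `D`-model of the program `P` -/
def isModel (I : Set (GrAtm Pu D)) (P : SProg V D Pu) : Prop :=
  ∀ γ ∈ P, ∀ v, γ.groundTrue I v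

/-- the ground instance `v(γ)` of the clause `γ` is locally stratified w.r.t. `σ` -/
def SClause.locStrat (σ : GrAtm Pu D → W) (γ : SClause V D Pu) (v : V → D) : Prop :=
  γ.constr v → ∀ l ∈ γ.body,
    (l.1 = true → σ (l.2.eval v) ≤ σ (γ.head.eval v)) ∧
    (l.1 = false → σ (l.2.eval v) < σ (γ.head.eval v))

/-- `P` is locally stratified w.r.t. the local stratification `σ : B_𝒟 → W` -/
def locStratWrt (σ : GrAtm Pu D → W) (P : SProg V D Pu) : Prop :=
  ∀ γ ∈ P, ∀ v, γ.locStrat σ v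

/-- `P` is locally stratified -/
def LocallyStratified (P : SProg V D Pu) : Prop := ∃ σ, locStratWrt σ P

/-- `I ≺ J` : `I` is preferable to `J` w.r.t. the local stratification `σ` -/
def pref (σ : GrAtm Pu D → W) (I J : Set (GrAtm Pu D)) : Prop :=
  ∀ A₁ ∈ I \ J, ∃ A₂ ∈ J \ I, σ A₂ < σ A₁

/-- `M` is a perfect model of `P` w.r.t. the local stratification `σ`:
a `D`-model preferable to every other `D`-model of `P` -/
def PerfectModelWrt (σ : GrAtm Pu D → W) (P : SProg V D Pu) (M : Set (GrAtm Pu D)) : Prop :=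
  isModel M P ∧ ∀ N, isModel N P → N ≠ M → pref σ M N

/-- `M` is a perfect model of `P` (w.r.t. some local stratification for `P`) -/
def IsPerfectModel (P : SProg V D Pu) (M : Set (GrAtm Pu D)) : Prop :=
  ∃ σ, locStratWrt σ P ∧ PerfectModelWrt σ P M

/-! ### Predicate dependencies -/

/-- the predicate `p` immediately depends on the predicate `q` in `P` -/
def immDep (P : SProg V D Pu) (p q : Pu) : Prop :=
  ∃ γ ∈ P, γ.head.pred = p ∧ ∃ l ∈ γ.body, (l.2).pred = q

/-- the predicate `p` depends on the predicate `q` in `P` -/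
def dependsOn (P : SProg V D Pu) : Pu → Pu → Prop := Relation.TransGen (immDep P)

/-- `Def(p, P)` : the definition of the predicate `p` in `P` -/
def DefOf (p : Pu) (P : SProg V D Pu) : SProg V D Pu := {γ ∈ P | γ.head.pred = p}

/-! ### Proof trees -/

/-- Finite trees whose internal nodes are ground atoms; the children of a node are
either subtrees (corresponding to positive literals) or leaves labelled by a ground
atom `B` (corresponding to negative literals `¬B`). A node with the empty list of
children is a node whose unique child is the empty conjunction `true`. -/
inductive PT (Pu D : Type) : Type where
  | node (A : GrAtm Pu D) (children : List (PT Pu D ⊕ GrAtm Pu D)) : PT Pu D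

/-- the ground atom at the root of a tree -/
def PT.root : PT Pu D → GrAtm Pu D
  | .node A _ => A

/-- the ground literal corresponding to a child of a node of a tree -/
def childLit : PT Pu D ⊕ GrAtm Pu D → Bool × GrAtm Pu D
  | .inl t => (true, t.root)
  | .inr B => (false, B)

/-- Validity of a tree w.r.t. a program `P` and an "oracle" `O` for the negative
leaves: each node `A` with children `L₁,…,Lᵣ` must be obtained from a ground instance
`A ← c ∧ L₁ ∧ … ∧ Lᵣ` (with `𝒟 ⊨ c`) of a clause of `P`, and every negative leaf
`¬B` must satisfy `O B`. -/
inductive PT.ValidW (P : SProg V D Pu) (O : GrAtm Pu D → Prop) : PT Pu D → Prop where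
  | node {A : GrAtm Pu D} {cs : List (PT Pu D ⊕ GrAtm Pu D)}
      (hc : ∃ γ ∈ P, ∃ v, γ.constr v ∧ γ.head.eval v = A ∧
        γ.body.map (fun l => (l.1, l.2.eval v)) = cs.map childLit)
      (hpos : ∀ t, Sum.inl t ∈ cs → PT.ValidW P O t)
      (hneg : ∀ B, Sum.inr B ∈ cs → O B) :
      PT.ValidW P O (.node A cs)

/-- `HasPTAux σ P α A` holds iff there is a proof tree for `A` and `P`, where a
negative leaf `¬B` is allowed only if there is no proof tree for `B` and `P` among
the proof trees for ground atoms of stratum `< α`. -/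
def HasPTAux (σ : GrAtm Pu D → W) (P : SProg V D Pu) (α : W) (A : GrAtm Pu D) : Prop :=
  ∃ T : PT Pu D, T.root = A ∧
    PT.ValidW P (fun B => ∀ _hlt : σ B < α, ¬ HasPTAux σ P (σ B) B) T
termination_by α.1
decreasing_by exact _hlt

/-- there exists a proof tree for the ground atom `A` and the program `P` -/
def HasProofTree (σ : GrAtm Pu D → W) (P : SProg V D Pu) (A : GrAtm Pu D) : Prop :=
  HasPTAux σ P (σ A) A

/-- `T` is a proof tree for the ground atom `A` and the program `P` -/
def IsProofTree (σ : GrAtm Pu D → W) (P : SProg V D Pu) (A : GrAtm Pu D) (T : PT Pu D) : Prop :=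
  T.root = A ∧
    PT.ValidW P (fun B => ∀ _hlt : σ B < σ A, ¬ HasPTAux σ P (σ B) B) T

/-! ### The measure `μ` -/

mutual
  /-- `size(T)` : the number of atoms occurring at non-leaf nodes of `T` -/
  inductive PT.HasSize : PT Pu D → ℕ → Prop where
    | node {A cs n} : ChildrenSize cs n → PT.HasSize (.node A cs) (1 + n)
  /-- total size of the subtrees among a list of children -/
  inductive ChildrenSize : List (PT Pu D ⊕ GrAtm Pu D) → ℕ → Prop where
    | nil : ChildrenSize [] 0
    | inl {t cs n m} : PT.HasSize t n → ChildrenSize cs m →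
        ChildrenSize (Sum.inl t :: cs) (n + m)
    | inr {B cs m} : ChildrenSize cs m → ChildrenSize (Sum.inr B :: cs) m
end

/-- the (non-strict) lexicographic ordering `≤_lex` on `W × ℕ` -/
def wnLE (a b : W × ℕ) : Prop := a.1 < b.1 ∨ (a.1 = b.1 ∧ a.2 ≤ b.2)

/-- the strict lexicographic ordering `<_lex` on `W × ℕ` -/
def wnLT (a b : W × ℕ) : Prop := a.1 < b.1 ∨ (a.1 = b.1 ∧ a.2 < b.2)

/-- `⟨α₁,m₁⟩ ⊕ ⟨α₂,m₂⟩ = ⟨max(α₁,α₂), m₁+m₂⟩` -/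
noncomputable def oplus (a b : W × ℕ) : W × ℕ := (max a.1 b.1, a.2 + b.2)

/-- `μ(A,P) = min_lex {⟨σ(A), size(T)⟩ | T is a proof tree for A and P}`:
`muAtomIs σ P A m` states that `μ(A,P)` is defined and equal to `m`. -/
def muAtomIs (σ : GrAtm Pu D → W) (P : SProg V D Pu) (A : GrAtm Pu D) (m : W × ℕ) : Prop :=
  (∃ (T : PT Pu D) (sz : ℕ), IsProofTree σ P A T ∧ T.HasSize sz ∧ m = (σ A, sz)) ∧
  (∀ (T : PT Pu D) (sz : ℕ), IsProofTree σ P A T → T.HasSize sz → wnLE m (σ A, sz))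

/-- `μ` on ground literals: `μ(A,P)` for an atom, `⟨σ(A),0⟩` for a negated atom `¬A` -/
def muLitIs (σ : GrAtm Pu D → W) (P : SProg V D Pu) :
    Bool × GrAtm Pu D → W × ℕ → Prop
  | (true, A), m => muAtomIs σ P A m
  | (false, A), m => m = (σ A, 0)

/-- `μ(L₁ ∧ … ∧ Lₙ, P) = μ(L₁,P) ⊕ … ⊕ μ(Lₙ,P)` -/
inductive muGoalIs (σ : GrAtm Pu D → W) (P : SProg V D Pu) :
    List (Bool × GrAtm Pu D) → W × ℕ → Prop where
  | nil : muGoalIs σ P [] (zeroW, 0)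
  | cons {l G m mg} : muLitIs σ P l m → muGoalIs σ P G mg →
      muGoalIs σ P (l :: G) (oplus m mg)

end CLP

namespace CLP

variable {V D Pu : Type}

theorem hasPTAux_iff (σ : GrAtm Pu D → W) (P : SProg V D Pu) (α : W) (A : GrAtm Pu D) :
    HasPTAux σ P α A ↔ ∃ T : PT Pu D, T.root = A ∧
      PT.ValidW P (fun B => σ B < α → ¬ HasPTAux σ P (σ B) B) T := by
  rw [HasPTAux]

/-- `M` is a stable model: fixpoint of the Gelfond–Lifschitz style operator. -/
def Stable (P : SProg V D Pu) (M : Set (GrAtm Pu D)) : Prop :=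
  ∀ A, A ∈ M ↔ ∃ T : PT Pu D, T.root = A ∧ PT.ValidW P (fun B => B ∉ M) T

theorem PT.ValidW.mono {P : SProg V D Pu} {O O' : GrAtm Pu D → Prop}
    (h : ∀ B, O B → O' B) {T} (hT : PT.ValidW P O T) : PT.ValidW P O' T := by
  induction hT with
  | node hc hpos hneg ih => exact .node hc ih (fun B hB => h B (hneg B hB))

theorem node_pos_le {P : SProg V D Pu} {σ : GrAtm Pu D → W} (hσ : locStratWrt σ P)
    {A : GrAtm Pu D} {cs : List (PT Pu D ⊕ GrAtm Pu D)}
    (hc : ∃ γ ∈ P, ∃ v, γ.constr v ∧ γ.head.eval v = A ∧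
        γ.body.map (fun l => (l.1, l.2.eval v)) = cs.map childLit)
    {t : PT Pu D} (ht : Sum.inl t ∈ cs) : σ t.root ≤ σ A := by
  obtain ⟨γ, hγ, v, hcv, hhead, hmap⟩ := hc
  have hmem : (true, t.root) ∈ cs.map childLit := by
    exact List.mem_map.mpr ⟨Sum.inl t, ht, rfl⟩
  rw [← hmap] at hmem
  obtain ⟨l, hl, hle⟩ := List.mem_map.mp hmem
  have h1 : l.1 = true := congrArg Prod.fst hle
  have h2 : l.2.eval v = t.root := congrArg Prod.snd hle
  have := (hσ γ hγ v hcv l hl).1 h1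
  rw [h2, hhead] at this
  exact this

theorem node_neg_lt {P : SProg V D Pu} {σ : GrAtm Pu D → W} (hσ : locStratWrt σ P)
    {A : GrAtm Pu D} {cs : List (PT Pu D ⊕ GrAtm Pu D)}
    (hc : ∃ γ ∈ P, ∃ v, γ.constr v ∧ γ.head.eval v = A ∧
        γ.body.map (fun l => (l.1, l.2.eval v)) = cs.map childLit)
    {B : GrAtm Pu D} (hB : Sum.inr B ∈ cs) : σ B < σ A := by
  obtain ⟨γ, hγ, v, hcv, hhead, hmap⟩ := hc
  have hmem : (false, B) ∈ cs.map childLit := by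
    exact List.mem_map.mpr ⟨Sum.inr B, hB, rfl⟩
  rw [← hmap] at hmem
  obtain ⟨l, hl, hle⟩ := List.mem_map.mp hmem
  have h1 : l.1 = false := congrArg Prod.fst hle
  have h2 : l.2.eval v = B := congrArg Prod.snd hle
  have := (hσ γ hγ v hcv l hl).2 h1
  rw [h2, hhead] at this
  exact this

theorem valid_strengthen {P : SProg V D Pu} {σ : GrAtm Pu D → W} (hσ : locStratWrt σ P)
    {O : GrAtm Pu D → Prop} {T : PT Pu D} (hT : PT.ValidW P O T) :
    ∀ β : W, σ T.root ≤ β → PT.ValidW P (fun B => O B ∧ σ B < β) T := by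
  induction hT with
  | @node A cs hc hpos hneg ih =>
    intro β hβ
    refine .node hc (fun t ht => ?_) (fun B hB =>
      ⟨hneg B hB, lt_of_lt_of_le (node_neg_lt hσ hc hB) hβ⟩)
    exact ih t ht β (le_trans (node_pos_le hσ hc ht) hβ)

theorem stable_of_strat {P : SProg V D Pu} {σ : GrAtm Pu D → W} (hσ : locStratWrt σ P) :
    Stable P {A | HasPTAux σ P (σ A) A} := by
  intro A
  constructor
  · intro hA
    rw [Set.mem_setOf_eq, hasPTAux_iff] at hA
    obtain ⟨T, hroot, hval⟩ := hA
    refine ⟨T, hroot, ?_⟩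
    have h2 := valid_strengthen hσ hval (σ A) (by rw [hroot])
    exact h2.mono (fun B hB => hB.1 hB.2)
  · rintro ⟨T, hroot, hval⟩
    rw [Set.mem_setOf_eq, hasPTAux_iff]
    refine ⟨T, hroot, hval.mono ?_⟩
    intro B hB _
    exact hB

theorem stable_isModel {P : SProg V D Pu} {M : Set (GrAtm Pu D)} (hM : Stable P M) :
    isModel M P := by
  classical
  intro γ hγ v hcv hbody
  have hex : ∀ l : {l // l ∈ γ.body}, l.1.1 = true → ∃ T : PT Pu D,
      T.root = l.1.2.eval v ∧ PT.ValidW P (fun B => B ∉ M) T := by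
    rintro ⟨l, hl⟩ h1
    have := hbody l hl
    simp only [litTrue] at this
    rw [if_pos h1] at this
    exact (hM _).mp this
  let g : {l // l ∈ γ.body} → PT Pu D ⊕ GrAtm Pu D := fun l =>
    if h : l.1.1 = true then Sum.inl (hex l h).choose else Sum.inr (l.1.2.eval v)
  have hg : ∀ x : {l // l ∈ γ.body}, childLit (g x) = (x.1.1, x.1.2.eval v) := by
    rintro ⟨l, hl⟩
    by_cases h : l.1 = true
    · simp only [g, dif_pos h, childLit, (hex ⟨l, hl⟩ h).choose_spec.1, h]
    · simp only [g, dif_neg h, childLit]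
      rw [Bool.not_eq_true] at h
      rw [h]
  rw [hM]
  refine ⟨.node (γ.head.eval v) (γ.body.attach.map g), rfl, ?_⟩
  refine .node ⟨γ, hγ, v, hcv, rfl, ?_⟩ ?_ ?_
  · rw [List.map_map]
    conv_lhs => rw [← List.attach_map_subtype_val γ.body, List.map_map]
    exact List.map_congr_left (fun x _ => (hg x).symm)
  · intro t ht
    obtain ⟨x, hx, hgx⟩ := List.mem_map.mp ht
    by_cases h : x.1.1 = true
    · have : g x = Sum.inl (hex x h).choose := dif_pos h
      rw [this] at hgx
      cases hgx
      exact (hex x h).choose_spec.2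
    · have : g x = Sum.inr (x.1.2.eval v) := dif_neg h
      rw [this] at hgx
      exact absurd hgx (by simp)
  · intro B hB
    obtain ⟨x, hx, hgx⟩ := List.mem_map.mp hB
    by_cases h : x.1.1 = true
    · have : g x = Sum.inl (hex x h).choose := dif_pos h
      rw [this] at hgx
      exact absurd hgx (by simp)
    · have hgx' : g x = Sum.inr (x.1.2.eval v) := dif_neg h
      rw [hgx'] at hgx
      cases hgx
      have := hbody x.1 x.2
      rw [Bool.not_eq_true] at h
      simpa [litTrue, h] using this

theorem pref_aux {P : SProg V D Pu} {M N : Set (GrAtm Pu D)} {σ : GrAtm Pu D → W}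
    (hσ : locStratWrt σ P) (hN : isModel N P)
    {T : PT Pu D} (hval : PT.ValidW P (fun B => B ∉ M) T) :
    T.root ∉ N → ∃ A₂ ∈ N \ M, σ A₂ < σ T.root := by
  induction hval with
  | @node A cs hc hpos hneg ih =>
    intro hAN
    obtain ⟨γ, hγ, v, hcv, hhead, hmap⟩ := hc
    have hmodel := hN γ hγ v
    have hfalse : ∃ l ∈ γ.body, ¬ litTrue N (l.1, l.2.eval v) := by
      by_contra hall
      push_neg at hall
      exact hAN (hhead ▸ hmodel hcv (fun l hl => hall l hl))
    obtain ⟨l, hl, hlf⟩ := hfalse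
    have hmem : (l.1, l.2.eval v) ∈ cs.map childLit := by
      rw [← hmap]; exact List.mem_map.mpr ⟨l, hl, rfl⟩
    obtain ⟨c, hcm, hceq⟩ := List.mem_map.mp hmem
    cases c with
    | inl t =>
      have h1 : l.1 = true := (congrArg Prod.fst hceq).symm
      have h2 : t.root = l.2.eval v := congrArg Prod.snd hceq
      have htN : t.root ∉ N := by
        intro htN
        apply hlf
        simp only [litTrue]
        rw [if_pos h1, ← h2]
        exact htN
      obtain ⟨A₂, hA₂, hlt⟩ := ih t hcm htN
      refine ⟨A₂, hA₂, lt_of_lt_of_le hlt ?_⟩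
      exact node_pos_le hσ ⟨γ, hγ, v, hcv, hhead, hmap⟩ hcm
    | inr B =>
      have h1 : l.1 = false := (congrArg Prod.fst hceq).symm
      have h2 : B = l.2.eval v := congrArg Prod.snd hceq
      have hBN : B ∈ N := by
        by_contra hBN
        apply hlf
        simp only [litTrue]
        rw [if_neg (by simp [h1]), ← h2]
        exact hBN
      exact ⟨B, ⟨hBN, hneg B hcm⟩, node_neg_lt hσ ⟨γ, hγ, v, hcv, hhead, hmap⟩ hcm⟩

theorem stable_pref {P : SProg V D Pu} {M : Set (GrAtm Pu D)} {σ : GrAtm Pu D → W}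
    (hσ : locStratWrt σ P) (hM : Stable P M)
    {N : Set (GrAtm Pu D)} (hN : isModel N P) : pref σ M N := by
  intro A₁ hA₁
  obtain ⟨T, hroot, hval⟩ := (hM A₁).mp hA₁.1
  have := pref_aux hσ hN hval (by rw [hroot]; exact hA₁.2)
  rw [hroot] at this
  exact this

theorem perfect_unique {P : SProg V D Pu} {σ : GrAtm Pu D → W} {M N : Set (GrAtm Pu D)}
    (hM : PerfectModelWrt σ P M) (hN : PerfectModelWrt σ P N) : N = M := by
  by_contra hne
  have h1 := hM.2 N hN.1 hne
  have h2 := hN.2 M hM.1 (Ne.symm hne)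
  have hS : ∃ A, A ∈ M \ N ∨ A ∈ N \ M := by
    by_contra h
    push_neg at h
    apply hne
    ext A
    constructor <;> intro hA <;> by_contra hA'
    · exact (h A).2 ⟨hA, hA'⟩
    · exact (h A).1 ⟨hA, hA'⟩
  obtain ⟨A, hA⟩ := hS
  set S : Set Ordinal.{0} := {o | ∃ A, (A ∈ M \ N ∨ A ∈ N \ M) ∧ (σ A).1 = o} with hSdef
  have hSne : S.Nonempty := ⟨(σ A).1, A, hA, rfl⟩
  obtain ⟨o, ⟨A₀, hA₀, ho⟩, hmin⟩ := Ordinal.lt_wf.has_min S hSne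
  cases hA₀ with
  | inl h =>
    obtain ⟨A₂, hA₂, hlt⟩ := h1 A₀ h
    exact hmin (σ A₂).1 ⟨A₂, Or.inr hA₂, rfl⟩ (ho ▸ hlt)
  | inr h =>
    obtain ⟨A₂, hA₂, hlt⟩ := h2 A₀ h
    exact hmin (σ A₂).1 ⟨A₂, Or.inl hA₂, rfl⟩ (ho ▸ hlt)

/-- Every locally stratified constraint logic program `P` has a
unique perfect model `M(P)`: there is a `D`-interpretation `M` which is a perfect
model of `P` w.r.t. every local stratification for `P`, and for every local
stratification `σ` for `P`, `M` is the only perfect model of `P` w.r.t. `σ`. -/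
theorem unique_perfect_model {V D Pu : Type} (P : SProg V D Pu) (hfin : P.Finite)
    (hls : LocallyStratified P) :
    ∃ M : Set (GrAtm Pu D),
      (∀ σ : GrAtm Pu D → W, locStratWrt σ P → PerfectModelWrt σ P M) ∧
      (∀ (σ : GrAtm Pu D → W) (N : Set (GrAtm Pu D)),
        locStratWrt σ P → PerfectModelWrt σ P N → N = M) := by
  obtain ⟨σ₀, hσ₀⟩ := hls
  have hstable : Stable P {A | HasPTAux σ₀ P (σ₀ A) A} := stable_of_strat hσ₀
  refine ⟨{A | HasPTAux σ₀ P (σ₀ A) A}, ?_, ?_⟩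
  · intro σ hσ
    exact ⟨stable_isModel hstable, fun N hN _ => stable_pref hσ hstable hN⟩
  · intro σ N hσ hN
    exact perfect_unique ⟨stable_isModel hstable, fun N' hN' _ => stable_pref hσ hstable hN'⟩ hN

end CLP
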